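/- Let 𝕋 be a triangulated category with a projective class (𝒫, ℐ), and let X → Y →^β Z →^γ ΣX be a distinguished triangle with β right almost split (i.e., β is not split epic and every map Y′ → Z that is not split epic factors through β). If Z has finite length l with respect to (𝒫, ℐ), then γ ∈ ℐ^{l−1}. -/

import Mathlib

open CategoryTheory Limits Pretriangulated

universe v u

variable (C : Type u) [Category.{v} C] [Preadditive C] [HasZeroObject C] [HasShift C ℤ]
  [∀ n : ℤ, (CategoryTheory.shiftFunctor C n).Additive] [Pretriangulated C]

/-- A projective class in a triangulated category: a class of objects `P` and an
ideal of morphisms `I` determining each other by orthogonality, such that every object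
sits in a distinguished triangle `P' → X → Y → ΣP'` with `P' ∈ P` and `X → Y` in `I`. -/
structure ProjClass where
  P : Set C
  I : CategoryTheory.MorphismProperty C
  P_iff : ∀ X : C, X ∈ P ↔ ∀ ⦃Y Z : C⦄ (g : Y ⟶ Z), I g → ∀ f : X ⟶ Y, f ≫ g = 0
  I_iff : ∀ ⦃Y Z : C⦄ (g : Y ⟶ Z), I g ↔ ∀ (P' : C), P' ∈ P → ∀ f : P' ⟶ Y, f ≫ g = 0
  exists_triangle : ∀ X : C, ∃ (P' Y : C) (f : P' ⟶ X) (g : X ⟶ Y) (h : Y ⟶ P'⟦(1 : ℤ)⟧),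
    P' ∈ P ∧ I g ∧ (Triangle.mk f g h ∈ distTriang C)

variable {C}

/-- The powers of the ideal `I`: `ipow n` consists of the `n`-fold composites of maps in `I`.
`ipow 0` consists of all maps. -/
def ProjClass.ipow (pc : ProjClass C) : ℕ → CategoryTheory.MorphismProperty C
  | 0 => fun _ _ _ => True
  | n + 1 => fun X Y g => ∃ (Z : C) (g₁ : X ⟶ Z) (g₂ : Z ⟶ Y),
      pc.I g₁ ∧ pc.ipow n g₂ ∧ g₁ ≫ g₂ = g

/-- The derived classes `𝒫ₙ`: `pcl 0` consists of the zero objects, and `X ∈ pcl (n+1)` iff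
`X` is a retract of an object `M` sitting in a distinguished triangle `P → M → Q → ΣP` with
`P ∈ 𝒫` and `Q ∈ pcl n`. -/
def ProjClass.pcl (pc : ProjClass C) : ℕ → Set C
  | 0 => {X | IsZero X}
  | n + 1 => {X | ∃ (M P Q : C) (r : X ⟶ M) (s : M ⟶ X) (f : P ⟶ M) (g : M ⟶ Q)
      (h : Q ⟶ P⟦(1 : ℤ)⟧), r ≫ s = 𝟙 X ∧ P ∈ pc.P ∧ Q ∈ pc.pcl n ∧
      (Triangle.mk f g h ∈ distTriang C)}

/-- `X` has length `n` with respect to the projective class: `n` is the least natural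
number with `X ∈ 𝒫ₙ`. -/
def ProjClass.Length (pc : ProjClass C) (X : C) (n : ℕ) : Prop :=
  X ∈ pc.pcl n ∧ ∀ m : ℕ, X ∈ pc.pcl m → n ≤ m


lemma ProjClass.ipow_comp_right (pc : ProjClass C) (n : ℕ) :
    ∀ {X Y W : C} (u : X ⟶ Y), pc.ipow n u → ∀ (e : Y ⟶ W), pc.ipow n (u ≫ e) := by
  induction n with
  | zero => intros; trivial
  | succ n ih =>
    rintro X Y W u ⟨Z, g₁, g₂, hg₁, hg₂, rfl⟩ e
    exact ⟨Z, g₁, g₂ ≫ e, hg₁, ih _ hg₂ e, by simp⟩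

open ZeroObject in
/-- For every object `Z` and every `n`, there is a distinguished triangle
`V → Z → W → ΣV` with `V ∈ 𝒫ₙ` and `Z → W ∈ ℐⁿ`. -/
lemma ProjClass.exists_pow_triangle (pc : ProjClass C) (n : ℕ) (Z : C) :
    ∃ (V W : C) (m : V ⟶ Z) (d : Z ⟶ W) (ι : W ⟶ V⟦(1 : ℤ)⟧),
      V ∈ pc.pcl n ∧ pc.ipow n d ∧ (Triangle.mk m d ι ∈ distTriang C) := by
  induction n generalizing Z with
  | zero =>
    exact ⟨0, Z, 0, 𝟙 Z, 0, isZero_zero C, trivial, contractible_distinguished₁ Z⟩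
  | succ n ih =>
    obtain ⟨P, Z₁, f, g, h, hP, hg, hT1⟩ := pc.exists_triangle Z
    obtain ⟨V, W, vm, c, w, hV, hc, hT2⟩ := ih Z₁
    obtain ⟨G, i, p, hTG⟩ := distinguished_cocone_triangle₂ (vm ≫ h)
    obtain ⟨k, hk1, hk2⟩ : ∃ k : G ⟶ Z, i ≫ k = 𝟙 P ≫ f ∧ p ≫ vm = k ≫ g :=
      complete_distinguished_triangle_morphism₂
        (Triangle.mk i p (vm ≫ h)) (Triangle.mk f g h) hTG hT1 (𝟙 P) vm (by
          show (vm ≫ h) ≫ (shiftFunctor C (1 : ℤ)).map (𝟙 P) = vm ≫ h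
          rw [CategoryTheory.Functor.map_id, Category.comp_id])
    obtain ⟨D, d, e, hT3⟩ := distinguished_cocone_triangle k
    have hkd : k ≫ d = 0 := comp_distTriang_mor_zero₁₂ _ hT3
    have hfik : f = i ≫ k := by rw [hk1, Category.id_comp]
    have hfd : f ≫ d = 0 := by rw [hfik, Category.assoc, hkd, comp_zero]
    obtain ⟨d₂, hd₂⟩ : ∃ d₂ : Z₁ ⟶ D, d = g ≫ d₂ :=
      Triangle.yoneda_exact₂ _ hT1 d hfd
    have hpv : p ≫ (vm ≫ d₂) = 0 := by
      rw [← Category.assoc, hk2, Category.assoc, ← hd₂, hkd]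
    obtain ⟨ψ, hψ⟩ : ∃ ψ : P⟦(1 : ℤ)⟧ ⟶ D, vm ≫ d₂ = (vm ≫ h) ≫ ψ :=
      Triangle.yoneda_exact₃ _ hTG (vm ≫ d₂) hpv
    have hvd : vm ≫ (d₂ - h ≫ ψ) = 0 := by
      rw [Preadditive.comp_sub, ← Category.assoc, ← hψ, sub_self]
    have hgh : g ≫ h = 0 := comp_distTriang_mor_zero₂₃ _ hT1
    have hgd : g ≫ (d₂ - h ≫ ψ) = d := by
      rw [Preadditive.comp_sub, ← hd₂, ← Category.assoc, hgh, zero_comp, sub_zero]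
    obtain ⟨ε, hε⟩ : ∃ ε : W ⟶ D, d₂ - h ≫ ψ = c ≫ ε :=
      Triangle.yoneda_exact₂ _ hT2 (d₂ - h ≫ ψ) hvd
    refine ⟨G, D, k, d, e, ?_, ?_, hT3⟩
    · exact ⟨G, P, V, 𝟙 G, 𝟙 G, i, p, vm ≫ h, by simp, hP, hV, hTG⟩
    · exact ⟨Z₁, g, c ≫ ε, hg, pc.ipow_comp_right n c hc ε, by rw [← hε, hgd]⟩

/-- If `X → Y →β Z →γ ΣX` is distinguished with `β` right almost split (not split epic,
and every non-split-epic map into `Z` factors through `β`), and `Z` has finite length `l`,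
then `γ ∈ ℐ^(l-1)`. -/
theorem connecting_in_ipow_of_rightAlmostSplit (pc : ProjClass C) {X Y Z : C}
    (α : X ⟶ Y) (β : Y ⟶ Z) (γ : Z ⟶ X⟦(1 : ℤ)⟧)
    (hT : Triangle.mk α β γ ∈ distTriang C)
    (hβ₁ : ¬ ∃ s : Z ⟶ Y, s ≫ β = 𝟙 Z)
    (hβ₂ : ∀ (Y' : C) (f : Y' ⟶ Z), (¬ ∃ s : Z ⟶ Y', s ≫ f = 𝟙 Z) → ∃ t : Y' ⟶ Y, t ≫ β = f)
    {l : ℕ} (hZ : pc.Length Z l) :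
    pc.ipow (l - 1) γ := by
  obtain ⟨hZl, hmin⟩ := hZ
  rcases l with _ | _ | n
  · trivial
  · trivial
  · show pc.ipow (n + 1) γ
    obtain ⟨V, W, m, d, ι, hV, hd, hT'⟩ := pc.exists_pow_triangle (n + 1) Z
    have hns : ¬ ∃ σ : Z ⟶ V, σ ≫ m = 𝟙 Z := by
      rintro ⟨σ, hσ⟩
      obtain ⟨M, P, Q, r, s, f', g', h', hrs, hP, hQ, hTM⟩ := hV
      have hmem : Z ∈ pc.pcl (n + 1) :=
        ⟨M, P, Q, σ ≫ r, s ≫ m, f', g', h', by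
          rw [Category.assoc, ← Category.assoc r s m, hrs, Category.id_comp, hσ],
          hP, hQ, hTM⟩
      have := hmin (n + 1) hmem
      omega
    obtain ⟨t, ht⟩ := hβ₂ V m hns
    have hβγ : β ≫ γ = 0 := comp_distTriang_mor_zero₂₃ _ hT
    have hmγ : m ≫ γ = 0 := by
      rw [← ht, Category.assoc, hβγ, comp_zero]
    obtain ⟨ε, hε⟩ : ∃ ε : W ⟶ X⟦(1 : ℤ)⟧, γ = d ≫ ε :=
      Triangle.yoneda_exact₂ _ hT' γ hmγ
    rw [hε]
    exact pc.ipow_comp_right (n + 1) d hd ε
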